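/- For any 0 < α, μ, η < 1 and m, k, ℓ ∈ ℕ, let S₁, …, S_k be independent random subsets of an m-element universe U, where each element of U is included in each S_i independently with probability α. Then with probability at least 1 − 2^{(log₂ k)·⌈8ln(2/μ)/α⌉ − μ²m/16} − 2^{ℓ·⌈ln(2/η)/α^ℓ⌉·log₂(2k) − ηm/6} − 2^{(log₂ k) − αm/3}, the following three properties hold simultaneously: (i) every subset S_i has size at most 2αm; (ii) the collection S = {S₁,…,S_k} is a (⌈ln(2/η)/α^ℓ⌉, ℓ, η)-intersection disperser; (iii) every subcollection of S of size ⌈8ln(2/μ)/α⌉ is (α/2, μ)-uniform. -/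

import Mathlib

open Finset

/-- `S` is an `(r, ℓ, η)`-intersection disperser. -/
def IsDisperser {U ι : Type*} [Fintype U] [DecidableEq U]
    (S : ι → Finset U) (r ℓ : ℕ) (η : ℝ) : Prop :=
  ∀ I : Fin r → Finset ι,
    (∀ a, (I a).Nonempty) →
    (∀ a, (I a).card ≤ ℓ) →
    (Pairwise fun a b => Disjoint (I a) (I b)) →
    (1 - η) * (Fintype.card U : ℝ) ≤ ((Finset.univ.sup fun a => (I a).inf S).card : ℝ)

/-- `IsUniformOn S I γ μ`: the subcollection of `S` indexed by `I` is `(γ, μ)`-uniform. -/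
def IsUniformOn {U ι : Type*} [Fintype U] (S : ι → Finset U) (I : Finset ι) (γ μ : ℝ) :
    Prop :=
  (1 - μ) * (Fintype.card U : ℝ) ≤
    ({u : U | γ * (I.card : ℝ) ≤ ({i : ι | i ∈ I ∧ u ∈ S i}.ncard : ℝ)}.ncard : ℝ)

/-- The probability of the event `E` when `k` subsets of the finite universe `U` are drawn
independently, each element being included in each subset independently with probability
`α`. An outcome `ω : Fin k → U → Bool` records, for each subset index `i` and element `u`,
whether `u` is included in the `i`-th subset. -/
noncomputable def prSets {U : Type*} [Fintype U] [DecidableEq U] (k : ℕ) (α : ℝ)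
    (E : Set (Fin k → U → Bool)) : ℝ :=
  ∑ ω : Fin k → U → Bool,
    E.indicator (fun ω => ∏ i : Fin k, ∏ u : U, cond (ω i u) α (1 - α)) ω

/-- The `i`-th random subset determined by the outcome `ω`. -/
def subsetOf {U : Type*} [Fintype U] {k : ℕ} (ω : Fin k → U → Bool) (i : Fin k) :
    Finset U :=
  Finset.univ.filter fun u => ω i u

namespace Stmt18Aux

open scoped Classical

/-- Indicator of a proposition. -/
noncomputable def indi (p : Prop) : ℝ := if p then 1 else 0

lemma indi_nonneg (p : Prop) : 0 ≤ indi p := by unfold indi; split <;> norm_num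

lemma indi_le_one (p : Prop) : indi p ≤ 1 := by unfold indi; split <;> norm_num

lemma indi_true {p : Prop} (hp : p) : indi p = 1 := if_pos hp
lemma indi_false {p : Prop} (hp : ¬ p) : indi p = 0 := if_neg hp

lemma indi_congr {p q : Prop} (h : p ↔ q) : indi p = indi q := by
  unfold indi
  by_cases hp : p
  · rw [if_pos hp, if_pos (h.mp hp)]
  · rw [if_neg hp, if_neg fun hq => hp (h.mpr hq)]

lemma indi_mono {p q : Prop} (h : p → q) : indi p ≤ indi q := by
  unfold indi; split
  · rw [if_pos (h ‹p›)]
  · exact indi_nonneg q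

lemma indi_not (p : Prop) : indi (¬ p) = 1 - indi p := by
  unfold indi; by_cases h : p <;> simp [h]

lemma indi_and (p q : Prop) : indi (p ∧ q) = indi p * indi q := by
  unfold indi; by_cases h : p <;> by_cases h' : q <;> simp [h, h']

lemma indi_exists_le_sum {ι : Type*} (s : Finset ι) (P : ι → Prop) :
    indi (∃ i ∈ s, P i) ≤ ∑ i ∈ s, indi (P i) := by
  by_cases h : ∃ i ∈ s, P i
  · obtain ⟨i, hi, hPi⟩ := h
    rw [indi_true ⟨i, hi, hPi⟩]
    calc (1:ℝ) = indi (P i) := (indi_true hPi).symm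
    _ ≤ ∑ i ∈ s, indi (P i) :=
        Finset.single_le_sum (fun j _ => indi_nonneg (P j)) hi
  · rw [indi_false h]
    exact Finset.sum_nonneg fun j _ => indi_nonneg (P j)

lemma indi_forall_prod {ι : Type*} (s : Finset ι) (P : ι → Prop) :
    indi (∀ i ∈ s, P i) = ∏ i ∈ s, indi (P i) := by
  unfold indi
  rw [Finset.prod_boole]
  by_cases h : ∀ i ∈ s, P i <;> simp [h]

variable {V : Type*} [Fintype V] [DecidableEq V]

/-- product Bernoulli weight -/
noncomputable def wt (α : ℝ) (f : V → Bool) : ℝ := ∏ v, cond (f v) α (1 - α)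

/-- expectation -/
noncomputable def Ex (α : ℝ) (g : (V → Bool) → ℝ) : ℝ := ∑ f, wt α f * g f

lemma wt_nonneg {α : ℝ} (h0 : 0 ≤ α) (h1 : α ≤ 1) (f : V → Bool) : 0 ≤ wt α f :=
  Finset.prod_nonneg fun v _ => by cases f v <;> simp [h0] <;> linarith

lemma Ex_nonneg {α : ℝ} (h0 : 0 ≤ α) (h1 : α ≤ 1) {g : (V → Bool) → ℝ}
    (hg : ∀ f, 0 ≤ g f) : 0 ≤ Ex α g :=
  Finset.sum_nonneg fun f _ => mul_nonneg (wt_nonneg h0 h1 f) (hg f)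

lemma Ex_mono {α : ℝ} (h0 : 0 ≤ α) (h1 : α ≤ 1) {g h : (V → Bool) → ℝ}
    (hgh : ∀ f, g f ≤ h f) : Ex α g ≤ Ex α h :=
  Finset.sum_le_sum fun f _ => mul_le_mul_of_nonneg_left (hgh f) (wt_nonneg h0 h1 f)

lemma Ex_prod_coord (α : ℝ) (G : V → Bool → ℝ) :
    Ex α (fun f => ∏ v, G v (f v)) = ∏ v, (α * G v true + (1 - α) * G v false) := by
  unfold Ex wt
  have : ∀ f : V → Bool, (∏ v, cond (f v) α (1 - α)) * ∏ v, G v (f v)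
      = ∏ v, (cond (f v) α (1 - α) * G v (f v)) := by
    intro f; rw [← Finset.prod_mul_distrib]
  simp_rw [this]
  rw [← Fintype.prod_sum (fun v b => cond b α (1 - α) * G v b)]
  congr 1; funext v
  simp [Fintype.sum_bool]

lemma Ex_smul (α c : ℝ) (g : (V → Bool) → ℝ) :
    Ex α (fun f => c * g f) = c * Ex α g := by
  unfold Ex; rw [Finset.mul_sum]; congr 1; funext f; ring

lemma sum_wt (α : ℝ) : ∑ f : V → Bool, wt α f = 1 := by
  have h := Ex_prod_coord (V := V) α (fun _ _ => 1)
  have h1 : α * 1 + (1 - α) * 1 = (1:ℝ) := by ring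
  rw [h1] at h
  simpa [Ex] using h

lemma Ex_const (α c : ℝ) : Ex (V := V) α (fun _ => c) = c := by
  unfold Ex
  rw [← Finset.sum_mul, sum_wt, one_mul]

lemma Ex_add (α : ℝ) (g h : (V → Bool) → ℝ) :
    Ex α (fun f => g f + h f) = Ex α g + Ex α h := by
  unfold Ex; rw [← Finset.sum_add_distrib]; congr 1; funext f; ring


/-- `g` depends only on coordinates in `s`. -/
def DepOn (g : (V → Bool) → ℝ) (s : Finset V) : Prop :=
  ∀ f f' : V → Bool, (∀ v ∈ s, f v = f' v) → g f = g f'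

lemma Ex_mul_of_depOn {α : ℝ} (p : V → Prop) [DecidablePred p]
    {g h : (V → Bool) → ℝ}
    (hg : DepOn g (univ.filter p)) (hh : DepOn h (univ.filter fun v => ¬ p v)) :
    Ex α (fun f => g f * h f) = Ex α g * Ex α h := by
  set e := (Equiv.piEquivPiSubtypeProd p (fun _ => Bool)).symm with he
  have hev : ∀ (x : ∀ _ : {v // p v}, Bool) (y : ∀ _ : {v // ¬ p v}, Bool) (v : V),
      e (x, y) v = if hv : p v then x ⟨v, hv⟩ else y ⟨v, hv⟩ := by
    intro x y v
    simp [he, Equiv.piEquivPiSubtypeProd]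
  have hwt : ∀ (x : ∀ _ : {v // p v}, Bool) (y : ∀ _ : {v // ¬ p v}, Bool),
      wt α (e (x, y)) =
      (∏ v : {v // p v}, cond (x v) α (1 - α)) *
      (∏ v : {v // ¬ p v}, cond (y v) α (1 - α)) := by
    intro x y
    unfold wt
    rw [← Fintype.prod_subtype_mul_prod_subtype p
      (fun v => cond (e (x, y) v) α (1 - α))]
    congr 1
    · exact Finset.prod_congr rfl fun v _ => by rw [hev, dif_pos v.2]
    · exact Finset.prod_congr rfl fun v _ => by rw [hev, dif_neg v.2]
  set x₀ : ∀ _ : {v // p v}, Bool := fun _ => true with hx₀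
  set y₀ : ∀ _ : {v // ¬ p v}, Bool := fun _ => true with hy₀
  have hgx : ∀ (x : ∀ _ : {v // p v}, Bool) (y : ∀ _ : {v // ¬ p v}, Bool),
      g (e (x, y)) = g (e (x, y₀)) := by
    intro x y
    apply hg
    intro v hv
    rw [Finset.mem_filter] at hv
    rw [hev, hev, dif_pos hv.2, dif_pos hv.2]
  have hhy : ∀ (x : ∀ _ : {v // p v}, Bool) (y : ∀ _ : {v // ¬ p v}, Bool),
      h (e (x, y)) = h (e (x₀, y)) := by
    intro x y
    apply hh
    intro v hv
    rw [Finset.mem_filter] at hv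
    rw [hev, hev, dif_neg hv.2, dif_neg hv.2]
  have key : ∀ F : (V → Bool) → ℝ, ∑ f, F f = ∑ x, ∑ y, F (e (x, y)) := by
    intro F
    rw [← Equiv.sum_comp e F, Fintype.sum_prod_type]
  have sum_wq : ∑ y : ∀ _ : {v // ¬ p v}, Bool,
      ∏ v : {v // ¬ p v}, cond (y v) α (1 - α) = 1 := sum_wt α
  have sum_wp : ∑ x : ∀ _ : {v // p v}, Bool,
      ∏ v : {v // p v}, cond (x v) α (1 - α) = 1 := sum_wt α
  have hEg : Ex α g = ∑ x, (∏ v : {v // p v}, cond (x v) α (1 - α)) * g (e (x, y₀)) := by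
    unfold Ex
    rw [key (fun f => wt α f * g f)]
    have : ∀ x y, wt α (e (x, y)) * g (e (x, y)) =
        ((∏ v : {v // p v}, cond (x v) α (1 - α)) * g (e (x, y₀))) *
        (∏ v : {v // ¬ p v}, cond (y v) α (1 - α)) := by
      intro x y; rw [hwt, hgx x y]; ring
    simp_rw [this]
    rw [← Finset.sum_mul_sum, sum_wq, mul_one]
  have hEh : Ex α h = ∑ y, (∏ v : {v // ¬ p v}, cond (y v) α (1 - α)) * h (e (x₀, y)) := by
    unfold Ex
    rw [key (fun f => wt α f * h f)]
    have : ∀ x y, wt α (e (x, y)) * h (e (x, y)) =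
        (∏ v : {v // p v}, cond (x v) α (1 - α)) *
        ((∏ v : {v // ¬ p v}, cond (y v) α (1 - α)) * h (e (x₀, y))) := by
      intro x y; rw [hwt, hhy x y]; ring
    simp_rw [this]
    rw [← Finset.sum_mul_sum, sum_wp, one_mul]
  rw [hEg, hEh]
  unfold Ex
  rw [key (fun f => wt α f * (g f * h f))]
  have : ∀ (x : ∀ _ : {v // p v}, Bool) (y : ∀ _ : {v // ¬ p v}, Bool),
      wt α (e (x, y)) * (g (e (x, y)) * h (e (x, y))) =
      ((∏ v : {v // p v}, cond (x v) α (1 - α)) * g (e (x, y₀))) *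
      ((∏ v : {v // ¬ p v}, cond (y v) α (1 - α)) * h (e (x₀, y))) := by
    intro x y; rw [hwt, hgx x y, hhy x y]; ring
  simp_rw [this]
  rw [← Finset.sum_mul_sum]


lemma depOn_mono {g : (V → Bool) → ℝ} {s t : Finset V} (h : s ⊆ t) (hg : DepOn g s) :
    DepOn g t := fun f f' hf => hg f f' fun v hv => hf v (h hv)

lemma Ex_prod_of_depOn {α : ℝ} {A : Type*} [DecidableEq A] (s : Finset A)
    (J : A → Finset V)
    (hJ : ∀ a ∈ s, ∀ b ∈ s, a ≠ b → Disjoint (J a) (J b))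
    (g : A → (V → Bool) → ℝ) (hg : ∀ a ∈ s, DepOn (g a) (J a)) :
    Ex α (fun f => ∏ a ∈ s, g a f) = ∏ a ∈ s, Ex α (g a) := by
  induction s using Finset.cons_induction with
  | empty => simpa using Ex_const (V := V) α 1
  | cons a s ha ih =>
    have hga : DepOn (g a) (univ.filter fun v => v ∈ J a) := by
      apply depOn_mono _ (hg a (Finset.mem_cons_self a s))
      intro v hv; simp [hv]
    have hrest : DepOn (fun f => ∏ b ∈ s, g b f) (univ.filter fun v => ¬ v ∈ J a) := by
      intro f f' hf
      apply Finset.prod_congr rfl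
      intro b hb
      apply hg b (Finset.mem_cons_of_mem hb)
      intro v hv
      apply hf
      simp only [Finset.mem_filter, Finset.mem_univ, true_and]
      exact fun hva => (Finset.disjoint_left.mp
        (hJ b (Finset.mem_cons_of_mem hb) a (Finset.mem_cons_self a s)
          (by rintro rfl; exact ha hb)) hv) hva
    have h2 := Ex_mul_of_depOn (α := α) (fun v => v ∈ J a) hga hrest
    simp_rw [Finset.prod_cons]
    rw [h2, ih (fun a' ha' b' hb' => hJ a' (Finset.mem_cons_of_mem ha') b'
      (Finset.mem_cons_of_mem hb')) (fun b hb => hg b (Finset.mem_cons_of_mem hb))]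

/-- number of indices in `s` whose event holds -/
noncomputable def cnt {B : Type*} (s : Finset B) (A : B → (V → Bool) → Prop)
    (f : V → Bool) : ℕ :=
  (s.filter (fun b => A b f)).card

lemma prod_one_add_indi {B : Type*} (s : Finset B) (A : B → (V → Bool) → Prop)
    (f : V → Bool) :
    ∏ b ∈ s, (1 + indi (A b f)) = (2:ℝ) ^ (cnt s A f) := by
  have : ∀ b ∈ s, (1 + indi (A b f)) = if A b f then (2:ℝ) else 1 := by
    intro b _; unfold indi; split <;> norm_num
  rw [Finset.prod_congr rfl this, Finset.prod_ite, Finset.prod_const,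
    Finset.prod_const_one, mul_one]
  rfl

lemma prod_one_sub_half_indi {B : Type*} (s : Finset B) (A : B → (V → Bool) → Prop)
    (f : V → Bool) :
    ∏ b ∈ s, (1 - indi (A b f) / 2) = (2:ℝ)⁻¹ ^ (cnt s A f) := by
  have : ∀ b ∈ s, (1 - indi (A b f) / 2) = if A b f then (2:ℝ)⁻¹ else 1 := by
    intro b _; unfold indi; split <;> norm_num
  rw [Finset.prod_congr rfl this, Finset.prod_ite, Finset.prod_const,
    Finset.prod_const_one, mul_one]
  rfl

lemma Ex_indi_nonneg {α : ℝ} (h0 : 0 ≤ α) (h1 : α ≤ 1) (P : (V → Bool) → Prop) :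
    0 ≤ Ex α (fun f => indi (P f)) :=
  Ex_nonneg h0 h1 fun f => indi_nonneg _

lemma Ex_indi_le_one {α : ℝ} (h0 : 0 ≤ α) (h1 : α ≤ 1) (P : (V → Bool) → Prop) :
    Ex α (fun f => indi (P f)) ≤ 1 := by
  have := Ex_mono (g := fun f => indi (P f)) (h := fun _ => (1:ℝ)) h0 h1
    (fun f => indi_le_one _)
  rwa [Ex_const] at this

lemma tail_upper {α : ℝ} (h0 : 0 ≤ α) (h1 : α ≤ 1) {B : Type*} [DecidableEq B]
    (s : Finset B) (A : B → (V → Bool) → Prop) (J : B → Finset V)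
    (hJ : ∀ a ∈ s, ∀ b ∈ s, a ≠ b → Disjoint (J a) (J b))
    (hdep : ∀ b ∈ s, DepOn (fun f => indi (A b f)) (J b)) (a : ℝ) :
    Ex α (fun f => indi (a < (cnt s A f : ℝ))) ≤
      (2:ℝ) ^ (-a) * ∏ b ∈ s, (1 + Ex α (fun f => indi (A b f))) := by
  have pointwise : ∀ f, indi (a < (cnt s A f : ℝ)) ≤
      (2:ℝ) ^ (-a) * ∏ b ∈ s, (1 + indi (A b f)) := by
    intro f
    rw [prod_one_add_indi]
    by_cases h : a < (cnt s A f : ℝ)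
    · rw [indi_true h, ← Real.rpow_natCast 2 (cnt s A f), ← Real.rpow_add two_pos]
      exact Real.one_le_rpow one_le_two (by linarith)
    · rw [indi_false h]
      positivity
  calc Ex α (fun f => indi (a < (cnt s A f : ℝ)))
      ≤ Ex α (fun f => (2:ℝ) ^ (-a) * ∏ b ∈ s, (1 + indi (A b f))) :=
        Ex_mono h0 h1 pointwise
    _ = (2:ℝ) ^ (-a) * Ex α (fun f => ∏ b ∈ s, (1 + indi (A b f))) := Ex_smul _ _ _
    _ = (2:ℝ) ^ (-a) * ∏ b ∈ s, (1 + Ex α (fun f => indi (A b f))) := by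
        rw [Ex_prod_of_depOn s J hJ (fun b f => 1 + indi (A b f))]
        · congr 1
          exact Finset.prod_congr rfl fun b _ => by
            rw [show (fun f => 1 + indi (A b f)) = (fun f => (fun _ => (1:ℝ)) f + (fun f => indi (A b f)) f) from rfl,
              Ex_add, Ex_const]
        · intro b hb f f' hf
          have := hdep b hb f f' hf
          dsimp only at this ⊢
          rw [this]

lemma tail_lower {α : ℝ} (h0 : 0 ≤ α) (h1 : α ≤ 1) {B : Type*} [DecidableEq B]
    (s : Finset B) (A : B → (V → Bool) → Prop) (J : B → Finset V)
    (hJ : ∀ a ∈ s, ∀ b ∈ s, a ≠ b → Disjoint (J a) (J b))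
    (hdep : ∀ b ∈ s, DepOn (fun f => indi (A b f)) (J b)) (a : ℝ) :
    Ex α (fun f => indi ((cnt s A f : ℝ) < a)) ≤
      (2:ℝ) ^ a * ∏ b ∈ s, (1 - Ex α (fun f => indi (A b f)) / 2) := by
  have pointwise : ∀ f, indi ((cnt s A f : ℝ) < a) ≤
      (2:ℝ) ^ a * ∏ b ∈ s, (1 - indi (A b f) / 2) := by
    intro f
    rw [prod_one_sub_half_indi]
    by_cases h : (cnt s A f : ℝ) < a
    · rw [indi_true h]
      have h2 : ((2:ℝ)⁻¹) ^ (cnt s A f) = (2:ℝ) ^ (-(cnt s A f : ℝ)) := by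
        rw [inv_pow, ← Real.rpow_natCast 2 (cnt s A f), ← Real.rpow_neg (by norm_num)]
      rw [h2, ← Real.rpow_add two_pos]
      exact Real.one_le_rpow one_le_two (by linarith)
    · rw [indi_false h]
      positivity
  calc Ex α (fun f => indi ((cnt s A f : ℝ) < a))
      ≤ Ex α (fun f => (2:ℝ) ^ a * ∏ b ∈ s, (1 - indi (A b f) / 2)) :=
        Ex_mono h0 h1 pointwise
    _ = (2:ℝ) ^ a * Ex α (fun f => ∏ b ∈ s, (1 - indi (A b f) / 2)) := Ex_smul _ _ _
    _ = (2:ℝ) ^ a * ∏ b ∈ s, (1 - Ex α (fun f => indi (A b f)) / 2) := by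
        rw [Ex_prod_of_depOn s J hJ (fun b f => 1 - indi (A b f) / 2)]
        · congr 1
          apply Finset.prod_congr rfl
          intro b _
          have : (fun f => 1 - indi (A b f) / 2)
              = (fun f => (fun _ => (1:ℝ)) f + (fun f => (-1/2) * indi (A b f)) f) := by
            funext f; ring
          rw [this, Ex_add, Ex_const, Ex_smul]
          ring
        · intro b hb f f' hf
          have := hdep b hb f f' hf
          dsimp only at this ⊢
          rw [this]


lemma Ex_affine (α c d : ℝ) (g : (V → Bool) → ℝ) :
    Ex α (fun f => c + d * g f) = c + d * Ex α g := by
  have : (fun f => c + d * g f)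
      = (fun f => (fun _ : V → Bool => c) f + (fun f => d * g f) f) := rfl
  rw [this, Ex_add, Ex_const (V := V), Ex_smul]

lemma Ex_indi_all (α : ℝ) (s : Finset V) :
    Ex α (fun f => indi (∀ v ∈ s, f v = true)) = α ^ s.card := by
  have h1 : (fun f : V → Bool => indi (∀ v ∈ s, f v = true))
      = fun f => ∏ v, (fun v (b : Bool) => if v ∈ s then indi (b = true) else 1) v (f v) := by
    funext f
    rw [indi_forall_prod]
    have h0 := Finset.prod_ite_mem univ s (fun v => indi (f v = true))
    rw [Finset.univ_inter] at h0
    exact h0.symm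
  rw [h1, Ex_prod_coord α (fun v (b : Bool) => if v ∈ s then indi (b = true) else 1)]
  have h2 : ∀ v : V, (α * (if v ∈ s then indi (true = true) else 1)
      + (1 - α) * (if v ∈ s then indi (false = true) else 1))
      = if v ∈ s then α else 1 := by
    intro v
    by_cases h : v ∈ s <;> simp [h, indi]
  rw [Finset.prod_congr rfl (fun v _ => h2 v), Finset.prod_ite_mem, Finset.univ_inter,
    Finset.prod_const]

lemma Ex_indi_bit (α : ℝ) (v : V) : Ex α (fun f => indi (f v = true)) = α := by
  have h := Ex_indi_all α {v}
  have h1 : (fun f : V → Bool => indi (∀ w ∈ ({v} : Finset V), f w = true))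
      = fun f => indi (f v = true) := by
    funext f
    congr 1
    simp
  rw [h1] at h
  simpa using h

lemma Ex_indi_avoid (α : ℝ) {A : Type*} [Fintype A] [DecidableEq A]
    (T : A → Finset V) (hT : ∀ a b : A, a ≠ b → Disjoint (T a) (T b)) :
    Ex α (fun f => indi (∀ a : A, ¬ ∀ v ∈ T a, f v = true))
      = ∏ a : A, (1 - α ^ (T a).card) := by
  have h1 : (fun f : V → Bool => indi (∀ a : A, ¬ ∀ v ∈ T a, f v = true))
      = fun f => ∏ a : A, (1 - indi (∀ v ∈ T a, f v = true)) := by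
    funext f
    have : (∀ a : A, ¬ ∀ v ∈ T a, f v = true)
        ↔ (∀ a ∈ (univ : Finset A), ¬ ∀ v ∈ T a, f v = true) := by simp
    rw [indi_congr this, indi_forall_prod]
    exact Finset.prod_congr rfl fun a _ => indi_not _
  rw [h1, Ex_prod_of_depOn univ T (fun a _ b _ hab => hT a b hab)
    (fun a f => 1 - indi (∀ v ∈ T a, f v = true)) ?_]
  · refine Finset.prod_congr rfl fun a _ => ?_
    have : (fun f : V → Bool => 1 - indi (∀ v ∈ T a, f v = true))
        = fun f => 1 + (-1) * indi (∀ v ∈ T a, f v = true) := by funext f; ring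
    rw [this, Ex_affine, Ex_indi_all]
    ring
  · intro a _ f f' hf
    dsimp only
    congr 1
    apply indi_congr
    constructor <;> intro hh v hv
    · rw [← hf v hv]; exact hh v hv
    · rw [hf v hv]; exact hh v hv


/-! ### Numeric estimates -/

lemma exp_pow_le {c : ℝ} (h0 : 0 ≤ c) (m : ℕ) : (1 + c) ^ m ≤ Real.exp (c * m) := by
  have h1 : (1 + c) ^ m ≤ Real.exp c ^ m := by
    apply pow_le_pow_left₀ (by linarith)
    linarith [Real.add_one_le_exp c]
  calc (1 + c) ^ m ≤ Real.exp c ^ m := h1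
    _ = Real.exp (c * m) := by rw [← Real.exp_nat_mul]; ring_nf

lemma rpow_neg_eq_exp {a : ℝ} : (2:ℝ) ^ a = Real.exp (Real.log 2 * a) :=
  Real.rpow_def_of_pos two_pos a

lemma pow_bound1 (m : ℕ) {α : ℝ} (h0 : 0 < α) (h1 : α < 1) :
    (2:ℝ) ^ (-(2 * α * m)) * (1 + α) ^ m ≤ (2:ℝ) ^ (-(α * m / 3)) := by
  rw [rpow_neg_eq_exp, rpow_neg_eq_exp]
  calc Real.exp (Real.log 2 * -(2 * α * m)) * (1 + α) ^ m
      ≤ Real.exp (Real.log 2 * -(2 * α * m)) * Real.exp (α * m) := by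
        apply mul_le_mul_of_nonneg_left (exp_pow_le h0.le m) (Real.exp_nonneg _)
    _ = Real.exp (Real.log 2 * -(2 * α * m) + α * m) := (Real.exp_add _ _).symm
    _ ≤ Real.exp (Real.log 2 * -(α * m / 3)) := by
        apply Real.exp_le_exp.2
        have hl : (0.6931471803 : ℝ) < Real.log 2 := Real.log_two_gt_d9
        have hm : (0:ℝ) ≤ α * m := by positivity
        nlinarith

lemma pow_bound2 (m : ℕ) {c d : ℝ} (h0 : 0 < c)
    (hd : Real.log 2 * d + c / 2 ≤ Real.log 2 * c) :
    (2:ℝ) ^ (-(c * m)) * (1 + c / 2) ^ m ≤ (2:ℝ) ^ (-(d * m)) := by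
  rw [rpow_neg_eq_exp, rpow_neg_eq_exp]
  calc Real.exp (Real.log 2 * -(c * m)) * (1 + c / 2) ^ m
      ≤ Real.exp (Real.log 2 * -(c * m)) * Real.exp (c / 2 * m) := by
        apply mul_le_mul_of_nonneg_left (exp_pow_le (by linarith) m) (Real.exp_nonneg _)
    _ = Real.exp (Real.log 2 * -(c * m) + c / 2 * m) := (Real.exp_add _ _).symm
    _ ≤ Real.exp (Real.log 2 * -(d * m)) := by
        apply Real.exp_le_exp.2
        have hm : (0:ℝ) ≤ (m:ℝ) := Nat.cast_nonneg m
        nlinarith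

/-- inner estimate for uniformity: `2^(αn/2) (1-α/2)^n ≤ μ/2` -/
lemma inner_unif {α μ : ℝ} (hα0 : 0 < α) (hα1 : α < 1) (hμ0 : 0 < μ) (hμ1 : μ < 1)
    {n : ℕ} (hn : 8 * Real.log (2 / μ) / α ≤ n) :
    (2:ℝ) ^ (α / 2 * n) * (1 - α / 2) ^ n ≤ μ / 2 := by
  have hL : 0 < Real.log (2 / μ) := Real.log_pos (by rw [lt_div_iff₀ hμ0]; linarith)
  have hαn : 8 * Real.log (2 / μ) ≤ α * n := by
    rw [div_le_iff₀ hα0] at hn; linarith [hn]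
  have h1 : (1 - α / 2) ^ n ≤ Real.exp (-(α / 2) * n) := by
    have := exp_pow_le (c := 0) le_rfl  -- dummy
    have h2 : (1 - α / 2) ^ n ≤ Real.exp (-(α / 2)) ^ n := by
      apply pow_le_pow_left₀ (by linarith)
      linarith [Real.add_one_le_exp (-(α / 2))]
    calc (1 - α / 2) ^ n ≤ Real.exp (-(α / 2)) ^ n := h2
      _ = Real.exp (-(α / 2) * n) := by rw [← Real.exp_nat_mul]; ring_nf
  rw [rpow_neg_eq_exp]
  calc Real.exp (Real.log 2 * (α / 2 * n)) * (1 - α / 2) ^ n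
      ≤ Real.exp (Real.log 2 * (α / 2 * n)) * Real.exp (-(α / 2) * n) := by
        apply mul_le_mul_of_nonneg_left h1 (Real.exp_nonneg _)
    _ = Real.exp (Real.log 2 * (α / 2 * n) + -(α / 2) * n) := (Real.exp_add _ _).symm
    _ ≤ Real.exp (-Real.log (2 / μ)) := by
        apply Real.exp_le_exp.2
        have hl2 : Real.log 2 < 0.6931471808 := Real.log_two_lt_d9
        have hl2' : (0:ℝ) < Real.log 2 := Real.log_pos one_lt_two
        nlinarith
    _ = μ / 2 := by
        rw [← Real.log_inv, Real.exp_log (by positivity), inv_div]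

/-- inner estimate for disperser: `(1-α^ℓ)^r ≤ η/2` -/
lemma inner_disp {α η : ℝ} (hα0 : 0 < α) (hα1 : α < 1) (hη0 : 0 < η) (hη1 : η < 1)
    {ℓ r : ℕ} (hr : Real.log (2 / η) / α ^ ℓ ≤ r) :
    (1 - α ^ ℓ) ^ r ≤ η / 2 := by
  have hαl : 0 < α ^ ℓ := pow_pos hα0 ℓ
  have hαl1 : α ^ ℓ ≤ 1 := pow_le_one₀ hα0.le hα1.le
  have hL : 0 < Real.log (2 / η) := Real.log_pos (by rw [lt_div_iff₀ hη0]; linarith)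
  have hrl : Real.log (2 / η) ≤ α ^ ℓ * r := by
    rw [div_le_iff₀ hαl] at hr; linarith [hr]
  have h1 : (1 - α ^ ℓ) ^ r ≤ Real.exp (-(α ^ ℓ) * r) := by
    have h2 : (1 - α ^ ℓ) ^ r ≤ Real.exp (-(α ^ ℓ)) ^ r := by
      apply pow_le_pow_left₀ (by linarith)
      linarith [Real.add_one_le_exp (-(α ^ ℓ))]
    calc (1 - α ^ ℓ) ^ r ≤ Real.exp (-(α ^ ℓ)) ^ r := h2
      _ = Real.exp (-(α ^ ℓ) * r) := by rw [← Real.exp_nat_mul]; ring_nf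
  calc (1 - α ^ ℓ) ^ r ≤ Real.exp (-(α ^ ℓ) * r) := h1
    _ ≤ Real.exp (-Real.log (2 / η)) := by
        apply Real.exp_le_exp.2; nlinarith
    _ = η / 2 := by rw [← Real.log_inv, Real.exp_log (by positivity), inv_div]


lemma Ex_finsum (α : ℝ) {ι : Type*} (s : Finset ι) (g : ι → (V → Bool) → ℝ) :
    Ex α (fun f => ∑ i ∈ s, g i f) = ∑ i ∈ s, Ex α (g i) := by
  unfold Ex
  simp_rw [Finset.mul_sum]
  rw [Finset.sum_comm]

section Concrete

variable {U : Type*} [Fintype U] [DecidableEq U] {k : ℕ}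

/-- currying outcomes -/
def cur (f : Fin k × U → Bool) : Fin k → U → Bool := fun i u => f (i, u)

lemma prSets_eq_Ex (α : ℝ) (E : Set (Fin k → U → Bool)) :
    prSets k α E = Ex α (fun f : Fin k × U → Bool => indi (cur f ∈ E)) := by
  unfold prSets Ex wt
  rw [← Equiv.sum_comp (Equiv.curry (Fin k) U Bool)
    (fun ω => E.indicator (fun ω => ∏ i : Fin k, ∏ u : U, cond (ω i u) α (1 - α)) ω)]
  apply Finset.sum_congr rfl
  intro f _
  rw [Set.indicator_apply]
  have hc : Equiv.curry (Fin k) U Bool f = cur f := rfl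
  rw [hc]
  have hw : (∏ i : Fin k, ∏ u : U, cond (cur f i u) α (1 - α))
      = ∏ v : Fin k × U, cond (f v) α (1 - α) := by
    rw [Fintype.prod_prod_type]
    rfl
  unfold indi
  dsimp only
  by_cases h : cur f ∈ E
  · rw [if_pos h, if_pos h, hw, mul_one]
  · rw [if_neg h, if_neg h, mul_zero]

lemma subsetOf_cur (f : Fin k × U → Bool) (i : Fin k) :
    subsetOf (cur f) i = univ.filter (fun u => f (i, u) = true) := by
  ext u
  simp [subsetOf]; rfl

lemma blocks_disjoint (u u' : U) (h : u ≠ u') :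
    Disjoint (univ.image (fun i : Fin k => (i, u)))
      (univ.image (fun i : Fin k => (i, u'))) := by
  rw [Finset.disjoint_left]
  intro v h1 h2
  simp only [Finset.mem_image] at h1 h2
  obtain ⟨a, -, rfl⟩ := h1
  obtain ⟨b, -, hb⟩ := h2
  exact h ((Prod.ext_iff.1 hb).2).symm

lemma cnt_eq_card_subsetOf (f : Fin k × U → Bool) (i : Fin k) :
    cnt univ (fun u (f : Fin k × U → Bool) => f (i, u) = true) f
      = (subsetOf (cur f) i).card := by
  unfold cnt
  congr 1
  ext u
  simp [subsetOf]; rfl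

/-- Bound for the event that some subset is too large. -/
lemma bound1 {α : ℝ} (h0 : 0 < α) (h1 : α < 1) :
    Ex (V := Fin k × U) α (fun f => indi (¬ ∀ i : Fin k,
        ((subsetOf (cur f) i).card : ℝ) ≤ 2 * α * (Fintype.card U : ℝ))) ≤
      (2:ℝ) ^ (Real.logb 2 (k : ℝ) - α * (Fintype.card U : ℝ) / 3) := by
  set m := Fintype.card U with hm
  have step1 : ∀ f : Fin k × U → Bool, indi (¬ ∀ i : Fin k,
      ((subsetOf (cur f) i).card : ℝ) ≤ 2 * α * (m : ℝ)) ≤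
      ∑ i : Fin k, indi (2 * α * (m : ℝ) <
        (cnt univ (fun u (f : Fin k × U → Bool) => f (i, u) = true) f : ℝ)) := by
    intro f
    have he : (¬ ∀ i : Fin k, ((subsetOf (cur f) i).card : ℝ) ≤ 2 * α * (m : ℝ))
        ↔ ∃ i ∈ (univ : Finset (Fin k)), 2 * α * (m : ℝ) <
          (cnt univ (fun u (f : Fin k × U → Bool) => f (i, u) = true) f : ℝ) := by
      push_neg
      constructor
      · rintro ⟨i, hi⟩
        refine ⟨i, Finset.mem_univ i, ?_⟩
        rw [cnt_eq_card_subsetOf]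
        exact hi
      · rintro ⟨i, _, hi⟩
        refine ⟨i, ?_⟩
        rw [cnt_eq_card_subsetOf] at hi
        exact hi
    rw [indi_congr he]
    exact indi_exists_le_sum univ _
  calc Ex α (fun f => indi (¬ ∀ i : Fin k,
        ((subsetOf (cur f) i).card : ℝ) ≤ 2 * α * (m : ℝ)))
      ≤ Ex α (fun f => ∑ i : Fin k, indi (2 * α * (m : ℝ) <
        (cnt univ (fun u (f : Fin k × U → Bool) => f (i, u) = true) f : ℝ))) :=
        Ex_mono h0.le h1.le step1
    _ = ∑ i : Fin k, Ex α (fun f => indi (2 * α * (m : ℝ) <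
        (cnt univ (fun u (f : Fin k × U → Bool) => f (i, u) = true) f : ℝ))) :=
        Ex_finsum α univ _
    _ ≤ ∑ _i : Fin k, (2:ℝ) ^ (-(2 * α * (m:ℝ))) * (1 + α) ^ m := by
        apply Finset.sum_le_sum
        intro i _
        have ht := tail_upper (B := U) h0.le h1.le univ
          (fun u (f : Fin k × U → Bool) => f (i, u) = true)
          (fun u => {(i, u)})
          (fun a _ b _ hab => Finset.disjoint_singleton.2 (by simp [hab]))
          (fun u _ f f' hf => by
            dsimp only
            rw [hf (i, u) (Finset.mem_singleton_self _)])
          (2 * α * (m : ℝ))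
        refine ht.trans ?_
        have hq : ∀ u : U, Ex α (fun f : Fin k × U → Bool => indi (f (i, u) = true)) = α :=
          fun u => Ex_indi_bit α (i, u)
        rw [Finset.prod_congr rfl (fun u _ => by rw [hq u])]
        rw [Finset.prod_const, Finset.card_univ, ← hm]
    _ = (k : ℝ) * ((2:ℝ) ^ (-(2 * α * (m:ℝ))) * (1 + α) ^ m) := by
        rw [Finset.sum_const, Finset.card_univ, Fintype.card_fin, nsmul_eq_mul]
    _ ≤ (2:ℝ) ^ (Real.logb 2 (k : ℝ) - α * (m : ℝ) / 3) := by
        rcases Nat.eq_zero_or_pos k with hk | hk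
        · subst hk
          simp only [Nat.cast_zero, zero_mul]
          positivity
        · have hkpos : (0:ℝ) < k := by exact_mod_cast hk
          rw [sub_eq_add_neg, Real.rpow_add two_pos, Real.rpow_logb two_pos (by norm_num) hkpos]
          apply mul_le_mul_of_nonneg_left _ hkpos.le
          exact pow_bound1 m h0 h1


lemma cnt_le_card {B : Type*} (s : Finset B) (A : B → (Fin k × U → Bool) → Prop)
    (f : Fin k × U → Bool) : cnt s A f ≤ s.card :=
  Finset.card_filter_le _ _

lemma card_not_real (A : U → (Fin k × U → Bool) → Prop) (f : Fin k × U → Bool) :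
    ((univ.filter fun u => ¬ A u f).card : ℝ)
      = (Fintype.card U : ℝ) - (cnt univ A f : ℝ) := by
  have h := Finset.card_filter_add_card_filter_not
    (s := (univ : Finset U)) (p := fun u => A u f)
  rw [Finset.card_univ] at h
  have h2 : (cnt univ A f) + (univ.filter fun u => ¬ A u f).card = Fintype.card U := h
  have h3 : ((cnt univ A f : ℕ) : ℝ) + ((univ.filter fun u => ¬ A u f).card : ℝ)
      = (Fintype.card U : ℝ) := by exact_mod_cast congrArg (Nat.cast : ℕ → ℝ) h2
  linarith

lemma card_not_real' (A : U → (Fin k × U → Bool) → Prop) (f : Fin k × U → Bool)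
    (t : Finset U) (ht : ∀ u, u ∈ t ↔ ¬ A u f) :
    (t.card : ℝ) = (Fintype.card U : ℝ) - (cnt univ A f : ℝ) := by
  have h1 : t = univ.filter (fun u => ¬ A u f) := by
    apply Finset.ext
    intro u
    rw [Finset.mem_filter]
    simp only [Finset.mem_univ, true_and]
    exact ht u
  rw [h1, card_not_real]

lemma isUniformOn_iff (f : Fin k × U → Bool) (I : Finset (Fin k)) (γ ν : ℝ) :
    IsUniformOn (subsetOf (cur f)) I γ ν ↔
      (1 - ν) * (Fintype.card U : ℝ) ≤
        ((univ.filter (fun u => γ * (I.card : ℝ) ≤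
          (cnt I (fun i (f : Fin k × U → Bool) => f (i, u) = true) f : ℝ))).card : ℝ) := by
  have h1 : ∀ u : U, ({i : Fin k | i ∈ I ∧ u ∈ subsetOf (cur f) i}.ncard)
      = cnt I (fun i (f : Fin k × U → Bool) => f (i, u) = true) f := by
    intro u
    have hs : {i : Fin k | i ∈ I ∧ u ∈ subsetOf (cur f) i}
        = ↑(I.filter (fun i => f (i, u) = true)) := by
      ext i
      simp [subsetOf]; intro _; rfl
    rw [hs, Set.ncard_coe_finset]
    unfold cnt
    congr 1
    ext i
    simp
  have h2 : {u : U | γ * (I.card : ℝ) ≤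
        (({i : Fin k | i ∈ I ∧ u ∈ subsetOf (cur f) i}.ncard : ℕ) : ℝ)}
      = ↑(univ.filter (fun u => γ * (I.card : ℝ) ≤
        (cnt I (fun i (f : Fin k × U → Bool) => f (i, u) = true) f : ℝ))) := by
    ext u
    simp only [Set.mem_setOf_eq, Finset.coe_filter, Finset.mem_univ, true_and,
      Set.mem_setOf_eq]
    rw [h1 u]
  unfold IsUniformOn
  rw [h2, Set.ncard_coe_finset]

/-- Bound for the event that some subcollection of size `n` fails to be uniform. -/
lemma bound3 {α μ : ℝ} (hα0 : 0 < α) (hα1 : α < 1) (hμ0 : 0 < μ) (hμ1 : μ < 1)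
    (n : ℕ) (hn : 8 * Real.log (2 / μ) / α ≤ (n : ℝ)) :
    Ex (V := Fin k × U) α (fun f => indi (¬ ∀ I : Finset (Fin k), I.card = n →
        IsUniformOn (subsetOf (cur f)) I (α / 2) μ)) ≤
      (2:ℝ) ^ (Real.logb 2 (k : ℝ) * (n : ℝ) - μ ^ 2 * (Fintype.card U : ℝ) / 16) := by
  set m := Fintype.card U with hm
  set Abad : Finset (Fin k) → U → (Fin k × U → Bool) → Prop :=
    fun I u f =>
      (cnt I (fun i (f : Fin k × U → Bool) => f (i, u) = true) f : ℝ) < α / 2 * (n : ℝ)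
    with hAbad
  have hn1 : 1 ≤ n := by
    by_contra hc
    push_neg at hc
    interval_cases n
    have hL : 0 < Real.log (2 / μ) := Real.log_pos (by rw [lt_div_iff₀ hμ0]; linarith)
    have : 0 < 8 * Real.log (2 / μ) / α := by positivity
    simp only [Nat.cast_zero] at hn
    linarith
  have stepA : ∀ f : Fin k × U → Bool, indi (¬ ∀ I : Finset (Fin k), I.card = n →
      IsUniformOn (subsetOf (cur f)) I (α / 2) μ) ≤
      ∑ I ∈ Finset.powersetCard n (univ : Finset (Fin k)),
        indi (μ * (m : ℝ) < (cnt univ (Abad I) f : ℝ)) := by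
    intro f
    refine le_trans (indi_mono ?_) (indi_exists_le_sum _ _)
    intro hbad
    push_neg at hbad
    obtain ⟨I, hIcard, hIbad⟩ := hbad
    refine ⟨I, Finset.mem_powersetCard_univ.2 hIcard, ?_⟩
    rw [isUniformOn_iff, not_le] at hIbad
    have hset : (univ.filter (fun u => α / 2 * (I.card : ℝ) ≤
        (cnt I (fun i (f : Fin k × U → Bool) => f (i, u) = true) f : ℝ)))
        = univ.filter (fun u => ¬ Abad I u f) := by
      ext u
      simp only [Finset.mem_filter, Finset.mem_univ, true_and, hAbad, not_lt, hIcard]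
    rw [hset, card_not_real] at hIbad
    have hcle : (cnt univ (Abad I) f : ℝ) ≤ (m : ℝ) := by
      have := cnt_le_card univ (Abad I) f
      rw [Finset.card_univ] at this
      exact_mod_cast this
    linarith
  calc Ex α (fun f => indi (¬ ∀ I : Finset (Fin k), I.card = n →
        IsUniformOn (subsetOf (cur f)) I (α / 2) μ))
      ≤ Ex α (fun f => ∑ I ∈ Finset.powersetCard n (univ : Finset (Fin k)),
          indi (μ * (m : ℝ) < (cnt univ (Abad I) f : ℝ))) := Ex_mono hα0.le hα1.le stepA
    _ = ∑ I ∈ Finset.powersetCard n (univ : Finset (Fin k)),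
          Ex α (fun f => indi (μ * (m : ℝ) < (cnt univ (Abad I) f : ℝ))) :=
        Ex_finsum α _ _
    _ ≤ ∑ _I ∈ Finset.powersetCard n (univ : Finset (Fin k)),
          (2:ℝ) ^ (-(μ * (m : ℝ))) * (1 + μ / 2) ^ m := by
        apply Finset.sum_le_sum
        intro I hI
        rw [Finset.mem_powersetCard_univ] at hI
        have ht := tail_upper (B := U) hα0.le hα1.le univ (Abad I)
          (fun u => univ.image (fun i : Fin k => (i, u)))
          (fun a _ b _ hab => blocks_disjoint a b hab)
          ?hdep (μ * (m : ℝ))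
        case hdep =>
          intro u _ f f' hf
          dsimp only
          apply indi_congr
          have hc : cnt I (fun i (f : Fin k × U → Bool) => f (i, u) = true) f
              = cnt I (fun i (f : Fin k × U → Bool) => f (i, u) = true) f' := by
            unfold cnt
            congr 1
            ext i
            simp only [Finset.mem_filter]
            rw [hf (i, u) (Finset.mem_image_of_mem _ (Finset.mem_univ i))]
          rw [hAbad]
          dsimp only
          rw [hc]
        refine ht.trans ?_
        have hq : ∀ u : U, Ex α (fun f : Fin k × U → Bool => indi (Abad I u f)) ≤ μ / 2 := by
          intro u
          have htl := tail_lower (B := Fin k) hα0.le hα1.le I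
            (fun i (f : Fin k × U → Bool) => f (i, u) = true)
            (fun i => {(i, u)})
            (fun a _ b _ hab => Finset.disjoint_singleton.2 (by simp [hab]))
            (fun i _ f f' hf => by
              dsimp only
              rw [hf (i, u) (Finset.mem_singleton_self _)])
            (α / 2 * (n : ℝ))
          rw [Finset.prod_congr rfl (fun i _ => by rw [Ex_indi_bit α (i, u)]),
            Finset.prod_const, hI] at htl
          exact htl.trans (inner_unif hα0 hα1 hμ0 hμ1 hn)
        calc (2:ℝ) ^ (-(μ * (m:ℝ))) * ∏ u : U, (1 + Ex α (fun f => indi (Abad I u f)))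
            ≤ (2:ℝ) ^ (-(μ * (m:ℝ))) * ∏ u : U, (1 + μ / 2) := by
              apply mul_le_mul_of_nonneg_left _ (Real.rpow_nonneg (by norm_num) _)
              apply Finset.prod_le_prod
              · intro u _
                have := Ex_indi_nonneg (V := Fin k × U) hα0.le hα1.le (Abad I u)
                linarith
              · intro u _
                linarith [hq u]
          _ = (2:ℝ) ^ (-(μ * (m:ℝ))) * (1 + μ / 2) ^ m := by
              rw [Finset.prod_const, Finset.card_univ]
    _ = ((Finset.powersetCard n (univ : Finset (Fin k))).card : ℝ) *
          ((2:ℝ) ^ (-(μ * (m : ℝ))) * (1 + μ / 2) ^ m) := by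
        rw [Finset.sum_const, nsmul_eq_mul]
    _ ≤ (2:ℝ) ^ (Real.logb 2 (k : ℝ) * (n : ℝ) - μ ^ 2 * (m : ℝ) / 16) := by
        rw [Finset.card_powersetCard, Finset.card_univ, Fintype.card_fin]
        rcases Nat.eq_zero_or_pos k with hk | hk
        · subst hk
          rw [Nat.choose_eq_zero_of_lt (by omega)]
          simp only [Nat.cast_zero, zero_mul]
          positivity
        · have hkpos : (0:ℝ) < k := by exact_mod_cast hk
          have he : Real.logb 2 (k : ℝ) * (n : ℝ) - μ ^ 2 * (m : ℝ) / 16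
              = Real.logb 2 (k : ℝ) * (n : ℝ) + (-(μ ^ 2 / 16 * (m : ℝ))) := by ring
          rw [he, Real.rpow_add two_pos]
          apply mul_le_mul
          · have h1 : ((k.choose n : ℕ) : ℝ) ≤ ((k ^ n : ℕ) : ℝ) := by
              exact_mod_cast Nat.choose_le_pow k n
            refine h1.trans (le_of_eq ?_)
            rw [Real.rpow_mul (by norm_num : (0:ℝ) ≤ 2),
              Real.rpow_logb two_pos (by norm_num) hkpos, Real.rpow_natCast, Nat.cast_pow]
          · have hd : Real.log 2 * (μ ^ 2 / 16) + μ / 2 ≤ Real.log 2 * μ := by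
              have hl : (0.6931471803 : ℝ) < Real.log 2 := Real.log_two_gt_d9
              have hlpos : (0:ℝ) < Real.log 2 := by linarith
              have h16 : μ ^ 2 ≤ μ := by nlinarith
              have key : Real.log 2 * (μ ^ 2 / 16) ≤ Real.log 2 * (μ / 16) :=
                mul_le_mul_of_nonneg_left (by linarith) hlpos.le
              have key2 : μ * 0.6931471803 ≤ μ * Real.log 2 :=
                mul_le_mul_of_nonneg_left hl.le hμ0.le
              nlinarith
            exact pow_bound2 m hμ0 hd
          · positivity
          · positivity


/-- Bound for the event that the collection fails to be a disperser. -/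
lemma bound2 {α η : ℝ} (hα0 : 0 < α) (hα1 : α < 1) (hη0 : 0 < η) (hη1 : η < 1)
    (ℓ r : ℕ) (hr : Real.log (2 / η) / α ^ ℓ ≤ (r : ℝ)) (hr1 : 1 ≤ r) :
    Ex (V := Fin k × U) α (fun f => indi (¬ IsDisperser (subsetOf (cur f)) r ℓ η)) ≤
      (2:ℝ) ^ ((ℓ : ℝ) * (r : ℝ) * Real.logb 2 (2 * (k : ℝ))
        - η * (Fintype.card U : ℝ) / 6) := by
  set m := Fintype.card U with hm
  set Abad : (Fin r → Finset (Fin k)) → U → (Fin k × U → Bool) → Prop :=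
    fun I u f => ∀ a : Fin r, ¬ ∀ i ∈ I a, f (i, u) = true with hAbad
  set Fam : Finset (Fin r → Finset (Fin k)) :=
    univ.filter (fun I : Fin r → Finset (Fin k) =>
      (∀ a, (I a).Nonempty) ∧ (∀ a, (I a).card ≤ ℓ) ∧
      Pairwise fun a b => Disjoint (I a) (I b)) with hFam
  have hsupeq : ∀ (I : Fin r → Finset (Fin k)), (∀ a, (I a).Nonempty) →
      ∀ f : Fin k × U → Bool,
      (((univ.sup fun a => (I a).inf (subsetOf (cur f))).card : ℕ) : ℝ)
        = (m : ℝ) - (cnt univ (Abad I) f : ℝ) := by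
    intro I hne f
    have hmem : ∀ u : U, u ∈ (univ.sup fun a => (I a).inf (subsetOf (cur f)))
        ↔ ¬ Abad I u f := by
      intro u
      constructor
      · intro h
        rw [Finset.mem_sup] at h
        obtain ⟨a, -, ha⟩ := h
        intro hA
        apply hA a
        intro i hi
        rw [← Finset.inf'_eq_inf (hne a), Finset.mem_inf'] at ha
        have h3 := ha i hi
        rw [subsetOf_cur, Finset.mem_filter] at h3
        exact h3.2
      · intro h
        rw [hAbad] at h
        dsimp only at h
        rw [not_forall] at h
        obtain ⟨a, ha⟩ := h
        rw [not_not] at ha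
        rw [Finset.mem_sup]
        refine ⟨a, Finset.mem_univ a, ?_⟩
        rw [← Finset.inf'_eq_inf (hne a), Finset.mem_inf']
        intro i hi
        rw [subsetOf_cur, Finset.mem_filter]
        exact ⟨Finset.mem_univ u, ha i hi⟩
    exact card_not_real' (Abad I) f _ hmem
  have stepA : ∀ f : Fin k × U → Bool, indi (¬ IsDisperser (subsetOf (cur f)) r ℓ η) ≤
      ∑ I ∈ Fam, indi (η * (m : ℝ) < (cnt univ (Abad I) f : ℝ)) := by
    intro f
    refine le_trans (indi_mono ?_) (indi_exists_le_sum _ _)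
    intro hbad
    unfold IsDisperser at hbad
    push_neg at hbad
    obtain ⟨I, hne, hcard, hdisj, hlt⟩ := hbad
    refine ⟨I, Finset.mem_filter.2 ⟨Finset.mem_univ I, hne, hcard, hdisj⟩, ?_⟩
    rw [hsupeq I hne f] at hlt
    have hcle : (cnt univ (Abad I) f : ℝ) ≤ (m : ℝ) := by
      have := cnt_le_card univ (Abad I) f
      rw [Finset.card_univ] at this
      exact_mod_cast this
    linarith
  calc Ex α (fun f => indi (¬ IsDisperser (subsetOf (cur f)) r ℓ η))
      ≤ Ex α (fun f => ∑ I ∈ Fam, indi (η * (m : ℝ) < (cnt univ (Abad I) f : ℝ))) :=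
        Ex_mono hα0.le hα1.le stepA
    _ = ∑ I ∈ Fam, Ex α (fun f => indi (η * (m : ℝ) < (cnt univ (Abad I) f : ℝ))) :=
        Ex_finsum α _ _
    _ ≤ ∑ _I ∈ Fam, (2:ℝ) ^ (-(η * (m : ℝ))) * (1 + η / 2) ^ m := by
        apply Finset.sum_le_sum
        intro I hI
        rw [hFam, Finset.mem_filter] at hI
        obtain ⟨-, hne, hcard, hdisj⟩ := hI
        have ht := tail_upper (B := U) hα0.le hα1.le univ (Abad I)
          (fun u => univ.image (fun i : Fin k => (i, u)))
          (fun a _ b _ hab => blocks_disjoint a b hab)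
          ?hdep (η * (m : ℝ))
        case hdep =>
          intro u _ f f' hf
          dsimp only
          apply indi_congr
          rw [hAbad]
          dsimp only
          apply forall_congr'
          intro a
          apply not_congr
          apply forall₂_congr
          intro i hi
          rw [hf (i, u) (Finset.mem_image_of_mem _ (Finset.mem_univ i))]
        refine ht.trans ?_
        have hq : ∀ u : U, Ex α (fun f : Fin k × U → Bool => indi (Abad I u f)) ≤ η / 2 := by
          intro u
          have hinj : Function.Injective (fun i : Fin k => (i, u)) := by
            intro a b hab
            exact (Prod.ext_iff.1 hab).1
          have hev : (fun f : Fin k × U → Bool => indi (Abad I u f))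
              = fun f => indi (∀ a : Fin r,
                ¬ ∀ v ∈ (I a).image (fun i : Fin k => (i, u)), f v = true) := by
            funext f
            apply indi_congr
            rw [hAbad]
            dsimp only
            apply forall_congr'
            intro a
            apply not_congr
            rw [Finset.forall_mem_image]
          rw [hev, Ex_indi_avoid α _ (fun a b hab => (Finset.disjoint_image hinj).2
            (hdisj hab))]
          calc ∏ a : Fin r, (1 - α ^ ((I a).image (fun i : Fin k => (i, u))).card)
              ≤ ∏ _a : Fin r, (1 - α ^ ℓ) := by
                apply Finset.prod_le_prod
                · intro a _
                  have h1 : α ^ ((I a).image (fun i : Fin k => (i, u))).card ≤ 1 :=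
                    pow_le_one₀ hα0.le hα1.le
                  linarith
                · intro a _
                  rw [Finset.card_image_of_injective _ hinj]
                  have h2 : α ^ ℓ ≤ α ^ (I a).card :=
                    pow_le_pow_of_le_one hα0.le hα1.le (hcard a)
                  linarith
            _ = (1 - α ^ ℓ) ^ r := by
                rw [Finset.prod_const, Finset.card_univ, Fintype.card_fin]
            _ ≤ η / 2 := inner_disp hα0 hα1 hη0 hη1 hr
        calc (2:ℝ) ^ (-(η * (m:ℝ))) * ∏ u : U, (1 + Ex α (fun f => indi (Abad I u f)))
            ≤ (2:ℝ) ^ (-(η * (m:ℝ))) * ∏ u : U, (1 + η / 2) := by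
              apply mul_le_mul_of_nonneg_left _ (Real.rpow_nonneg (by norm_num) _)
              apply Finset.prod_le_prod
              · intro u _
                have := Ex_indi_nonneg (V := Fin k × U) hα0.le hα1.le (Abad I u)
                linarith
              · intro u _
                linarith [hq u]
          _ = (2:ℝ) ^ (-(η * (m:ℝ))) * (1 + η / 2) ^ m := by
              rw [Finset.prod_const, Finset.card_univ]
    _ = (Fam.card : ℝ) * ((2:ℝ) ^ (-(η * (m : ℝ))) * (1 + η / 2) ^ m) := by
        rw [Finset.sum_const, nsmul_eq_mul]
    _ ≤ (2:ℝ) ^ ((ℓ : ℝ) * (r : ℝ) * Real.logb 2 (2 * (k : ℝ)) - η * (m : ℝ) / 6) := by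
        rcases Nat.eq_zero_or_pos k with hk | hk
        · have hFam0 : Fam = ∅ := by
            rw [Finset.eq_empty_iff_forall_notMem]
            intro I hI
            rw [hFam, Finset.mem_filter] at hI
            obtain ⟨-, hne, -, -⟩ := hI
            obtain ⟨i, -⟩ := hne ⟨0, hr1⟩
            subst hk
            exact Fin.elim0 i
          rw [hFam0]
          simp only [Finset.card_empty, Nat.cast_zero, zero_mul]
          positivity
        · have hkpos : (0:ℝ) < k := by exact_mod_cast hk
          have h2k : (0:ℝ) < 2 * (k:ℝ) := by linarith
          have hcount : Fam.card ≤ (2 * k) ^ (ℓ * r) := by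
            set T : Finset (Finset (Fin k)) :=
              univ.filter (fun s : Finset (Fin k) => s.card ≤ ℓ) with hT
            have hsub : Fam ⊆ Fintype.piFinset (fun _ : Fin r => T) := by
              intro I hI
              rw [hFam, Finset.mem_filter] at hI
              rw [Fintype.mem_piFinset]
              intro a
              rw [hT, Finset.mem_filter]
              exact ⟨Finset.mem_univ _, hI.2.2.1 a⟩
            have h1 : Fam.card ≤ T.card ^ r := by
              refine (Finset.card_le_card hsub).trans ?_
              rw [Fintype.card_piFinset]
              rw [Finset.prod_const, Finset.card_univ, Fintype.card_fin]
            have hTcard : T.card ≤ (2 * k) ^ ℓ := by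
              have hsub2 : T ⊆ (Finset.range (ℓ+1)).biUnion
                  (fun j => Finset.powersetCard j (univ : Finset (Fin k))) := by
                intro s hs
                rw [hT, Finset.mem_filter] at hs
                rw [Finset.mem_biUnion]
                exact ⟨s.card, Finset.mem_range.2 (Nat.lt_succ_of_le hs.2),
                  Finset.mem_powersetCard_univ.2 rfl⟩
              refine (Finset.card_le_card hsub2).trans
                ((Finset.card_biUnion_le).trans ?_)
              have hstep : ∀ j ∈ Finset.range (ℓ+1),
                  (Finset.powersetCard j (univ : Finset (Fin k))).card ≤ k ^ ℓ := by
                intro j hj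
                rw [Finset.card_powersetCard, Finset.card_univ, Fintype.card_fin]
                exact (Nat.choose_le_pow k j).trans
                  (Nat.pow_le_pow_right hk (Nat.lt_succ_iff.1 (Finset.mem_range.1 hj)))
              refine (Finset.sum_le_sum hstep).trans ?_
              rw [Finset.sum_const, Finset.card_range, smul_eq_mul]
              calc (ℓ + 1) * k ^ ℓ ≤ 2 ^ ℓ * k ^ ℓ :=
                    Nat.mul_le_mul_right _ (Nat.lt_two_pow_self (n := ℓ))
                _ = (2 * k) ^ ℓ := (mul_pow 2 k ℓ).symm
            calc Fam.card ≤ T.card ^ r := h1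
              _ ≤ ((2 * k) ^ ℓ) ^ r := Nat.pow_le_pow_left hTcard r
              _ = (2 * k) ^ (ℓ * r) := by rw [← pow_mul]
          have he : (ℓ : ℝ) * (r : ℝ) * Real.logb 2 (2 * (k : ℝ)) - η * (m : ℝ) / 6
              = Real.logb 2 (2 * (k:ℝ)) * ((ℓ * r : ℕ) : ℝ) + (-(η / 6 * (m : ℝ))) := by
            push_cast
            ring
          rw [he, Real.rpow_add two_pos]
          apply mul_le_mul
          · have h1 : ((Fam.card : ℕ) : ℝ) ≤ (((2 * k) ^ (ℓ * r) : ℕ) : ℝ) := by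
              exact_mod_cast hcount
            refine h1.trans (le_of_eq ?_)
            rw [Real.rpow_mul (by norm_num : (0:ℝ) ≤ 2),
              Real.rpow_logb two_pos (by norm_num) h2k, Real.rpow_natCast]
            push_cast
            ring
          · have hd : Real.log 2 * (η / 6) + η / 2 ≤ Real.log 2 * η := by
              have hl : (0.6931471803 : ℝ) < Real.log 2 := Real.log_two_gt_d9
              have key2 : η * 0.6931471803 ≤ η * Real.log 2 :=
                mul_le_mul_of_nonneg_left hl.le hη0.le
              nlinarith
            exact pow_bound2 m hη0 hd
          · positivity
          · positivity


lemma indi_not_and3 {p q w : Prop} :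
    indi (¬ (p ∧ q ∧ w)) ≤ indi (¬ p) + indi (¬ q) + indi (¬ w) := by
  by_cases hp : p <;> by_cases hq : q <;> by_cases hw : w <;>
    simp [indi, hp, hq, hw] <;> norm_num

end Concrete
end Stmt18Aux

open Stmt18Aux in
/-- For random subsets `S₁, …, S_k` of an `m`-element universe, each including each element
independently with probability `α`, with probability at least
`1 − 2^{(log₂ k)·⌈8ln(2/μ)/α⌉ − μ²m/16} − 2^{ℓ·⌈ln(2/η)/α^ℓ⌉·log₂(2k) − ηm/6}
 − 2^{log₂ k − αm/3}`, the following hold simultaneously: (i) every subset has size at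
most `2αm`; (ii) the collection is a `(⌈ln(2/η)/α^ℓ⌉, ℓ, η)`-intersection disperser;
(iii) every subcollection of size `⌈8ln(2/μ)/α⌉` is `(α/2, μ)`-uniform. -/
theorem stmt18 {U : Type*} [Fintype U] [DecidableEq U] (m k ℓ : ℕ)
    (hU : Fintype.card U = m)
    (α μ η : ℝ) (hα0 : 0 < α) (hα1 : α < 1) (hμ0 : 0 < μ) (hμ1 : μ < 1)
    (hη0 : 0 < η) (hη1 : η < 1) :
    1 - (2 : ℝ) ^ (Real.logb 2 (k : ℝ) * (⌈8 * Real.log (2 / μ) / α⌉₊ : ℝ) -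
          μ ^ 2 * (m : ℝ) / 16) -
        (2 : ℝ) ^ ((ℓ : ℝ) * (⌈Real.log (2 / η) / α ^ ℓ⌉₊ : ℝ) *
          Real.logb 2 (2 * (k : ℝ)) - η * (m : ℝ) / 6) -
        (2 : ℝ) ^ (Real.logb 2 (k : ℝ) - α * (m : ℝ) / 3) ≤
      prSets (U := U) k α
        {ω | (∀ i : Fin k, ((subsetOf ω i).card : ℝ) ≤ 2 * α * (m : ℝ)) ∧
          IsDisperser (subsetOf ω) ⌈Real.log (2 / η) / α ^ ℓ⌉₊ ℓ η ∧
          (∀ I : Finset (Fin k), I.card = ⌈8 * Real.log (2 / μ) / α⌉₊ →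
            IsUniformOn (subsetOf ω) I (α / 2) μ)} := by
  subst hU
  set n : ℕ := ⌈8 * Real.log (2 / μ) / α⌉₊ with hn
  set r : ℕ := ⌈Real.log (2 / η) / α ^ ℓ⌉₊ with hrdef
  set E : Set (Fin k → U → Bool) :=
    {ω | (∀ i : Fin k, ((subsetOf ω i).card : ℝ) ≤ 2 * α * (Fintype.card U : ℝ)) ∧
      IsDisperser (subsetOf ω) r ℓ η ∧
      (∀ I : Finset (Fin k), I.card = n →
        IsUniformOn (subsetOf ω) I (α / 2) μ)} with hE
  rw [prSets_eq_Ex α E]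
  -- split off the complementary event
  have hsplit : Ex α (fun f : Fin k × U → Bool => indi (cur f ∈ E))
      = 1 - Ex α (fun f : Fin k × U → Bool => indi (¬ cur f ∈ E)) := by
    have h1 : (fun f : Fin k × U → Bool => indi (cur f ∈ E))
        = fun f => 1 + (-1) * indi (¬ cur f ∈ E) := by
      funext f
      rw [indi_not]
      ring
    rw [h1, Ex_affine]
    ring
  rw [hsplit]
  have key : Ex α (fun f : Fin k × U → Bool => indi (¬ cur f ∈ E)) ≤
      (2 : ℝ) ^ (Real.logb 2 (k : ℝ) * (n : ℝ) - μ ^ 2 * (Fintype.card U : ℝ) / 16) +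
      (2 : ℝ) ^ ((ℓ : ℝ) * (r : ℝ) * Real.logb 2 (2 * (k : ℝ))
        - η * (Fintype.card U : ℝ) / 6) +
      (2 : ℝ) ^ (Real.logb 2 (k : ℝ) - α * (Fintype.card U : ℝ) / 3) := by
    have hpt : ∀ f : Fin k × U → Bool, indi (¬ cur f ∈ E) ≤
        indi (¬ ∀ I : Finset (Fin k), I.card = n →
          IsUniformOn (subsetOf (cur f)) I (α / 2) μ) +
        indi (¬ IsDisperser (subsetOf (cur f)) r ℓ η) +
        indi (¬ ∀ i : Fin k,
          ((subsetOf (cur f) i).card : ℝ) ≤ 2 * α * (Fintype.card U : ℝ)) := by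
      intro f
      have hiff : (cur f ∈ E) ↔
          ((∀ i : Fin k, ((subsetOf (cur f) i).card : ℝ) ≤ 2 * α * (Fintype.card U : ℝ)) ∧
           IsDisperser (subsetOf (cur f)) r ℓ η ∧
           (∀ I : Finset (Fin k), I.card = n →
             IsUniformOn (subsetOf (cur f)) I (α / 2) μ)) := Iff.rfl
      rw [indi_congr (not_congr hiff)]
      refine le_trans indi_not_and3 ?_
      have h3 := indi_nonneg (¬ ∀ i : Fin k,
        ((subsetOf (cur f) i).card : ℝ) ≤ 2 * α * (Fintype.card U : ℝ))
      have h4 := indi_nonneg (¬ IsDisperser (subsetOf (cur f)) r ℓ η)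
      have h5 := indi_nonneg (¬ ∀ I : Finset (Fin k), I.card = n →
        IsUniformOn (subsetOf (cur f)) I (α / 2) μ)
      linarith
    have hr1 : 1 ≤ r := by
      rw [hrdef]
      apply Nat.ceil_pos.2
      have hL : 0 < Real.log (2 / η) := Real.log_pos (by rw [lt_div_iff₀ hη0]; linarith)
      positivity
    calc Ex α (fun f : Fin k × U → Bool => indi (¬ cur f ∈ E))
        ≤ Ex α (fun f : Fin k × U → Bool =>
            indi (¬ ∀ I : Finset (Fin k), I.card = n →
              IsUniformOn (subsetOf (cur f)) I (α / 2) μ) +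
            indi (¬ IsDisperser (subsetOf (cur f)) r ℓ η) +
            indi (¬ ∀ i : Fin k,
              ((subsetOf (cur f) i).card : ℝ) ≤ 2 * α * (Fintype.card U : ℝ))) :=
          Ex_mono hα0.le hα1.le hpt
      _ = Ex α (fun f : Fin k × U → Bool =>
            indi (¬ ∀ I : Finset (Fin k), I.card = n →
              IsUniformOn (subsetOf (cur f)) I (α / 2) μ)) +
          Ex α (fun f : Fin k × U → Bool =>
            indi (¬ IsDisperser (subsetOf (cur f)) r ℓ η)) +
          Ex α (fun f : Fin k × U → Bool =>
            indi (¬ ∀ i : Fin k,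
              ((subsetOf (cur f) i).card : ℝ) ≤ 2 * α * (Fintype.card U : ℝ))) := by
          rw [Ex_add α (fun f : Fin k × U → Bool =>
              indi (¬ ∀ I : Finset (Fin k), I.card = n →
                IsUniformOn (subsetOf (cur f)) I (α / 2) μ) +
              indi (¬ IsDisperser (subsetOf (cur f)) r ℓ η))
            (fun f : Fin k × U → Bool =>
              indi (¬ ∀ i : Fin k,
                ((subsetOf (cur f) i).card : ℝ) ≤ 2 * α * (Fintype.card U : ℝ))),
            Ex_add α (fun f : Fin k × U → Bool =>
              indi (¬ ∀ I : Finset (Fin k), I.card = n →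
                IsUniformOn (subsetOf (cur f)) I (α / 2) μ))
            (fun f : Fin k × U → Bool =>
              indi (¬ IsDisperser (subsetOf (cur f)) r ℓ η))]
      _ ≤ (2 : ℝ) ^ (Real.logb 2 (k : ℝ) * (n : ℝ) - μ ^ 2 * (Fintype.card U : ℝ) / 16) +
          (2 : ℝ) ^ ((ℓ : ℝ) * (r : ℝ) * Real.logb 2 (2 * (k : ℝ))
            - η * (Fintype.card U : ℝ) / 6) +
          (2 : ℝ) ^ (Real.logb 2 (k : ℝ) - α * (Fintype.card U : ℝ) / 3) := by
          refine add_le_add (add_le_add ?_ ?_) ?_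
          · exact bound3 hα0 hα1 hμ0 hμ1 n (hn ▸ Nat.le_ceil _)
          · exact bound2 hα0 hα1 hη0 hη1 ℓ r (hrdef ▸ Nat.le_ceil _) hr1
          · exact bound1 hα0 hα1
  linarith
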